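/- If n is a squarefree positive integer with gcd(n, φ(n)) = 1, then every group of order n is cyclic. -/

import Mathlib

open Subgroup

private lemma isCyclic_of_comm_squarefree (G : Type) [CommGroup G] [Finite G]
    (hsf : Squarefree (Nat.card G)) : IsCyclic G := by
  apply IsCyclic.of_exponent_eq_card
  refine Nat.dvd_antisymm Group.exponent_dvd_nat_card ?_
  have h := Nat.prod_primeFactors_of_squarefree hsf
  rw [← h]
  apply Finset.prod_primes_dvd
  · exact fun p hp => (Nat.prime_of_mem_primeFactors hp).prime
  · intro p hp
    have hp' : p.Prime := Nat.prime_of_mem_primeFactors hp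
    haveI := Fact.mk hp'
    obtain ⟨g, hg⟩ := exists_prime_orderOf_dvd_card' p (Nat.dvd_of_mem_primeFactors hp)
    exact hg ▸ Monoid.order_dvd_exponent g

private lemma main_aux : ∀ n : ℕ, ∀ (G : Type) [Group G] [Finite G],
    Nat.card G = n → Squarefree n → Nat.gcd n (Nat.totient n) = 1 → IsCyclic G := by
  intro n
  induction n using Nat.strong_induction_on with
  | _ n ih =>
  intro G _ _ hcard hsf hgcd
  rcases eq_or_ne n 1 with rfl | hn1
  · haveI : Subsingleton G := (Nat.card_eq_one_iff_unique.mp hcard).1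
    exact isCyclic_of_subsingleton
  have hn0 : n ≠ 0 := hsf.ne_zero
  set p := n.minFac with hpdef
  have hp : p.Prime := Nat.minFac_prime hn1
  haveI := Fact.mk hp
  have hpn : p ∣ n := n.minFac_dvd
  obtain ⟨P⟩ : Nonempty (Sylow p G) := inferInstance
  have hfact : n.factorization p = 1 :=
    le_antisymm ((Nat.squarefree_iff_factorization_le_one hn0).mp hsf p)
      (hp.factorization_pos_of_dvd hn0 hpn)
  have hPcard : Nat.card P = p := by
    rw [P.card_eq_multiplicity, hcard, hfact, pow_one]
  have hPcyc : IsCyclic P := isCyclic_of_prime_card hPcard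
  -- N(P) ≤ C(P)
  have hP : normalizer ((P : Subgroup G) : Set G) ≤ centralizer ((P : Subgroup G) : Set G) := by
    set f := (P : Subgroup G).normalizerMonoidHom with hf
    have h1 : Nat.card f.range ∣ n :=
      (card_dvd_of_surjective f.rangeRestrict f.rangeRestrict_surjective).trans
        ((card_subgroup_dvd_card _).trans hcard.dvd)
    have h2 : Nat.card f.range ∣ Nat.totient n := by
      calc Nat.card f.range ∣ Nat.card (MulAut P) := card_subgroup_dvd_card _
        _ = Nat.totient p := by rw [IsCyclic.card_mulAut, hPcard]
        _ ∣ Nat.totient n := Nat.totient_dvd_of_dvd hpn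
    have h3 : Nat.card f.range = 1 :=
      Nat.eq_one_of_dvd_one (hgcd ▸ Nat.dvd_gcd h1 h2)
    have h4 : f.ker = ⊤ := by
      rw [eq_top_iff']
      intro x
      rw [MonoidHom.mem_ker]
      have : f x ∈ f.range := ⟨x, rfl⟩
      rwa [Subgroup.card_eq_one.mp h3, Subgroup.mem_bot] at this
    rw [normalizerMonoidHom_ker] at h4
    exact subgroupOf_eq_top.mp h4
  have hcompl := MonoidHom.ker_transferSylow_isComplement' P hP
  set K := (MonoidHom.transferSylow P hP).ker with hK
  set m := Nat.card K with hm
  have hKP : m * p = n := by rw [hm, ← hPcard, ← hcard]; exact hcompl.card_mul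
  have hmn : m ∣ n := ⟨p, hKP.symm⟩
  have hm0 : 0 < m := Nat.card_pos
  have hmlt : m < n := by
    rw [← hKP]
    exact lt_mul_iff_one_lt_right hm0 |>.mpr hp.one_lt
  have hgcdm : Nat.gcd m (Nat.totient m) = 1 :=
    Nat.eq_one_of_dvd_one (hgcd ▸ Nat.dvd_gcd ((Nat.gcd_dvd_left _ _).trans hmn)
      ((Nat.gcd_dvd_right _ _).trans (Nat.totient_dvd_of_dvd hmn)))
  haveI hKcyc : IsCyclic K := ih m hmlt K rfl (hsf.squarefree_of_dvd hmn) hgcdm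
  -- K is central
  have hKcent : K ≤ center G := by
    set c := (MulAut.conjNormal : G →* MulAut K) with hc
    have h1 : Nat.card c.range ∣ n :=
      (card_dvd_of_surjective c.rangeRestrict c.rangeRestrict_surjective).trans hcard.dvd
    have h2 : Nat.card c.range ∣ Nat.totient n := by
      calc Nat.card c.range ∣ Nat.card (MulAut K) := card_subgroup_dvd_card _
        _ = Nat.totient m := by rw [IsCyclic.card_mulAut]
        _ ∣ Nat.totient n := Nat.totient_dvd_of_dvd hmn
    have h3 : Nat.card c.range = 1 :=
      Nat.eq_one_of_dvd_one (hgcd ▸ Nat.dvd_gcd h1 h2)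
    intro k hk
    rw [Subgroup.mem_center_iff]
    intro g
    have : c g ∈ c.range := ⟨g, rfl⟩
    rw [Subgroup.card_eq_one.mp h3, Subgroup.mem_bot] at this
    have h5 : ((c g) ⟨k, hk⟩ : G) = k := by rw [this]; rfl
    rw [hc, MulAut.conjNormal_apply] at h5
    rwa [mul_inv_eq_iff_eq_mul] at h5
  -- G/K is cyclic of order p
  have hqcard : Nat.card (G ⧸ K) = p := by
    have h := K.card_eq_card_quotient_mul_card_subgroup
    rw [hcard, ← hm] at h
    have h' : Nat.card (G ⧸ K) * m = p * m := by rw [← h, ← hKP, Nat.mul_comm]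
    exact Nat.eq_of_mul_eq_mul_right hm0 h'
  haveI : IsCyclic (G ⧸ K) := isCyclic_of_prime_card hqcard
  letI : CommGroup G := commGroupOfCyclicCenterQuotient (QuotientGroup.mk' K)
    (by rw [QuotientGroup.ker_mk']; exact hKcent)
  exact isCyclic_of_comm_squarefree G (hcard ▸ hsf)

/-- If `n` is squarefree and `gcd(n, φ(n)) = 1`, then every group of order `n` is cyclic. -/
theorem cyclic_of_squarefree_coprime_totient (n : ℕ) (hsf : Squarefree n)
    (hgcd : Nat.gcd n (Nat.totient n) = 1)
    (G : Type) [Group G] [Fintype G] (hG : Fintype.card G = n) :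
    IsCyclic G := by
  exact main_aux n G (by rw [Nat.card_eq_fintype_card, hG]) hsf hgcd
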